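/- For any two positive invertible operators ρ and σ on a finite-dimensional Hilbert space and any q ∈ [0,1), the Tsallis relative operator entropy satisfies ρ - ρσ⁻¹ρ ≤ T_q(ρ||σ) ≤ σ - ρ in the Loewner order. -/

import Mathlib

open Matrix
open scoped ComplexOrder

/-- Real power of a Hermitian matrix via its spectral decomposition
(defined to be `0` on non-Hermitian matrices). -/
noncomputable def mpow {d : ℕ} (A : Matrix (Fin d) (Fin d) ℂ) (r : ℝ) :
    Matrix (Fin d) (Fin d) ℂ :=
  if hA : A.IsHermitian then
    (hA.eigenvectorUnitary : Matrix (Fin d) (Fin d) ℂ) *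
      Matrix.diagonal (fun i => ((hA.eigenvalues i ^ r : ℝ) : ℂ)) *
      star (hA.eigenvectorUnitary : Matrix (Fin d) (Fin d) ℂ)
  else 0

/-- The Tsallis relative operator entropy
`T_q(ρ‖σ) = (ρ^{1/2} (ρ^{-1/2} σ ρ^{-1/2})^{1-q} ρ^{1/2} - ρ)/(1-q)`. -/
noncomputable def Tq {d : ℕ} (ρ σ : Matrix (Fin d) (Fin d) ℂ) (q : ℝ) :
    Matrix (Fin d) (Fin d) ℂ :=
  (((1 - q : ℝ) : ℂ))⁻¹ •
    (mpow ρ (1/2) * mpow (mpow ρ (-(1/2)) * σ * mpow ρ (-(1/2))) (1 - q) * mpow ρ (1/2) - ρ)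


section Aux

variable {d : ℕ} {A : Matrix (Fin d) (Fin d) ℂ}

variable {d : ℕ} {A : Matrix (Fin d) (Fin d) ℂ}

/-- Functional calculus of a Hermitian matrix. -/
noncomputable def fcal (hA : A.IsHermitian) (f : ℝ → ℝ) : Matrix (Fin d) (Fin d) ℂ :=
  (hA.eigenvectorUnitary : Matrix (Fin d) (Fin d) ℂ) *
    Matrix.diagonal (fun i => ((f (hA.eigenvalues i) : ℝ) : ℂ)) *
    star (hA.eigenvectorUnitary : Matrix (Fin d) (Fin d) ℂ)

lemma fcal_congr (hA : A.IsHermitian) {f g : ℝ → ℝ}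
    (h : ∀ i, f (hA.eigenvalues i) = g (hA.eigenvalues i)) : fcal hA f = fcal hA g := by
  unfold fcal; congr 2; exact congrArg _ (funext fun i => by rw [h])

lemma fcal_mul (hA : A.IsHermitian) (f g : ℝ → ℝ) :
    fcal hA f * fcal hA g = fcal hA (fun x => f x * g x) := by
  unfold fcal
  have h1 : star (hA.eigenvectorUnitary : Matrix (Fin d) (Fin d) ℂ) *
      (hA.eigenvectorUnitary : Matrix (Fin d) (Fin d) ℂ) = 1 := by
    simpa using (Matrix.mem_unitaryGroup_iff').mp hA.eigenvectorUnitary.2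
  calc _ = (hA.eigenvectorUnitary : Matrix (Fin d) (Fin d) ℂ) *
        ((Matrix.diagonal (fun i => ((f (hA.eigenvalues i) : ℝ) : ℂ)) *
          (star (hA.eigenvectorUnitary : Matrix (Fin d) (Fin d) ℂ) *
            (hA.eigenvectorUnitary : Matrix (Fin d) (Fin d) ℂ))) *
          Matrix.diagonal (fun i => ((g (hA.eigenvalues i) : ℝ) : ℂ))) *
        star (hA.eigenvectorUnitary : Matrix (Fin d) (Fin d) ℂ) := by
        simp only [mul_assoc]
    _ = _ := by
        rw [h1, mul_one, diagonal_mul_diagonal]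
        congr 2
        exact funext fun i => by push_cast; ring

lemma fcal_one (hA : A.IsHermitian) : fcal hA (fun _ => 1) = 1 := by
  unfold fcal
  simp only [Complex.ofReal_one, diagonal_one, mul_one]
  simpa using (Matrix.mem_unitaryGroup_iff).mp hA.eigenvectorUnitary.2

lemma fcal_id (hA : A.IsHermitian) : fcal hA (fun x => x) = A := by
  conv_rhs => rw [hA.spectral_theorem]
  rfl

lemma fcal_isHermitian (hA : A.IsHermitian) (f : ℝ → ℝ) : (fcal hA f).IsHermitian := by
  unfold fcal
  simp only [Matrix.IsHermitian, conjTranspose_mul, star_eq_conjTranspose,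
    conjTranspose_conjTranspose, diagonal_conjTranspose]
  rw [mul_assoc]
  congr 2
  simp [Pi.star_def, Complex.conj_ofReal]

lemma fcal_smul (hA : A.IsHermitian) (c : ℝ) (f : ℝ → ℝ) :
    ((c : ℂ)) • fcal hA f = fcal hA (fun x => c * f x) := by
  unfold fcal
  rw [← smul_mul_assoc, ← mul_smul_comm]
  congr 2
  ext i j
  by_cases h : i = j <;> simp [Matrix.diagonal_apply, h]

lemma fcal_sub (hA : A.IsHermitian) (f g : ℝ → ℝ) :
    fcal hA f - fcal hA g = fcal hA (fun x => f x - g x) := by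
  unfold fcal
  rw [← Matrix.sub_mul, ← Matrix.mul_sub, diagonal_sub]
  congr 2
  exact funext fun i => by push_cast; ring

lemma fcal_posSemidef (hA : A.IsHermitian) {f : ℝ → ℝ}
    (h : ∀ i, 0 ≤ f (hA.eigenvalues i)) : (fcal hA f).PosSemidef := by
  unfold fcal
  rw [star_eq_conjTranspose]
  exact (Matrix.PosSemidef.diagonal fun i => by
    simpa using (Complex.real_le_real.mpr (h i))).mul_mul_conjTranspose_same _

lemma fcal_inv (hA' : A.PosDef) :
    A⁻¹ = fcal hA'.isHermitian (fun x => x⁻¹) := by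
  refine (Matrix.inv_eq_left_inv ?_)
  have := fcal_mul hA'.isHermitian (fun x => x⁻¹) (fun x => x)
  rw [fcal_id] at this
  rw [this, fcal_congr hA'.isHermitian
    (g := fun _ => 1) (fun i => inv_mul_cancel₀ (hA'.eigenvalues_pos i).ne'), fcal_one]

lemma mpow_eq (hA : A.IsHermitian) (r : ℝ) : mpow A r = fcal hA (fun x => x ^ r) :=
  dif_pos hA

lemma scalar_ub {x p : ℝ} (hx : 0 < x) (hp0 : 0 < p) (hp1 : p ≤ 1) :
    p⁻¹ * (x ^ p - 1) ≤ x - 1 := by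
  have h := rpow_one_add_le_one_add_mul_self (s := x - 1) (by linarith) hp0.le hp1
  simp only [add_sub_cancel] at h
  rw [inv_mul_le_iff₀ hp0]
  nlinarith

lemma scalar_lb {x p : ℝ} (hx : 0 < x) (hp0 : 0 < p) (hp1 : p ≤ 1) :
    1 - x⁻¹ ≤ p⁻¹ * (x ^ p - 1) := by
  have hxi : 0 < x⁻¹ := inv_pos.mpr hx
  have h := rpow_one_add_le_one_add_mul_self (s := x⁻¹ - 1) (by linarith) hp0.le hp1
  simp only [add_sub_cancel] at h
  -- h : x⁻¹ ^ p ≤ 1 + p * (x⁻¹ - 1)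
  have hxp : 0 < x ^ p := Real.rpow_pos_of_pos hx p
  have hinv : (x ^ p)⁻¹ ≤ 1 + p * (x⁻¹ - 1) := by
    rw [← Real.inv_rpow hx.le]; exact h
  have ht : 0 < 1 + p * (x⁻¹ - 1) := lt_of_lt_of_le (inv_pos.mpr hxp) hinv
  have h2 : (1 + p * (x⁻¹ - 1))⁻¹ ≤ x ^ p := inv_le_of_inv_le₀ hxp hinv
  have h3 : 1 - p * (x⁻¹ - 1) ≤ (1 + p * (x⁻¹ - 1))⁻¹ := by
    rw [show (1 + p * (x⁻¹ - 1))⁻¹ = 1 / (1 + p * (x⁻¹ - 1)) from (one_div _).symm, le_div_iff₀ ht]; nlinarith [sq_nonneg (p * (x⁻¹ - 1))]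
  rw [inv_mul_eq_div, le_div_iff₀ hp0]
  nlinarith

lemma posDef_conj {B M : Matrix (Fin d) (Fin d) ℂ} (hM : M.PosDef)
    (hB : B.IsHermitian) (hBu : IsUnit B) : (B * M * B).PosDef := by
  refine posDef_iff_dotProduct_mulVec.mpr ⟨?_, ?_⟩
  · simp only [Matrix.IsHermitian, conjTranspose_mul, hB.eq, hM.isHermitian.eq, mul_assoc]
  · intro x hx
    have hBx : B *ᵥ x ≠ 0 := by
      intro hc
      exact hx (Matrix.mulVec_injective_iff_isUnit.mpr hBu (by simpa using hc))
    have : star x ⬝ᵥ (B * M * B) *ᵥ x = star (B *ᵥ x) ⬝ᵥ M *ᵥ (B *ᵥ x) := by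
      rw [← mulVec_mulVec, ← mulVec_mulVec, dotProduct_mulVec, star_mulVec, hB.eq]
    rw [this]
    exact hM.dotProduct_mulVec_pos hBx


end Aux

theorem tsallis_operator_entropy_bounds {d : ℕ} (ρ σ : Matrix (Fin d) (Fin d) ℂ)
    (hρ : ρ.PosDef) (hσ : σ.PosDef) (q : ℝ) (hq0 : 0 ≤ q) (hq1 : q < 1) :
    (Tq ρ σ q - (ρ - ρ * σ⁻¹ * ρ)).PosSemidef ∧ ((σ - ρ) - Tq ρ σ q).PosSemidef := by
  have hρH := hρ.isHermitian
  set p : ℝ := 1 - q with hp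
  have hp0 : 0 < p := by simp [hp]; linarith
  have hp1 : p ≤ 1 := by simp [hp]; linarith
  set P := mpow ρ (1/2) with hPdef
  set Q := mpow ρ (-(1/2)) with hQdef
  have hPf : P = fcal hρH (fun x => x ^ (1/2 : ℝ)) := mpow_eq hρH _
  have hQf : Q = fcal hρH (fun x => x ^ (-(1/2) : ℝ)) := mpow_eq hρH _
  have hPH : P.IsHermitian := by rw [hPf]; exact fcal_isHermitian _ _
  have hQH : Q.IsHermitian := by rw [hQf]; exact fcal_isHermitian _ _
  have hPQ : P * Q = 1 := by
    rw [hPf, hQf, fcal_mul, fcal_congr hρH (g := fun _ => 1)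
      (fun i => by
        rw [← Real.rpow_add (hρ.eigenvalues_pos i)]
        norm_num), fcal_one]
  have hQP : Q * P = 1 := by
    rw [hPf, hQf, fcal_mul, fcal_congr hρH (g := fun _ => 1)
      (fun i => by
        rw [← Real.rpow_add (hρ.eigenvalues_pos i)]
        norm_num), fcal_one]
  have hPP : P * P = ρ := by
    rw [hPf, fcal_mul, fcal_congr hρH (g := fun x => x)
      (fun i => by
        rw [← Real.rpow_add (hρ.eigenvalues_pos i)]
        norm_num), fcal_id]
  have hQu : IsUnit Q := (Matrix.isUnit_iff_isUnit_det Q).mpr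
    (IsUnit.of_mul_eq_one P.det (by rw [← Matrix.det_mul, hQP, Matrix.det_one]))
  set A := Q * σ * Q with hAdef
  have hApd : A.PosDef := posDef_conj hσ hQH hQu
  have hAH : A.IsHermitian := hApd.isHermitian
  have hQinv : Q⁻¹ = P := Matrix.inv_eq_left_inv hPQ
  have hAinv : A⁻¹ = P * σ⁻¹ * P := by
    rw [hAdef, Matrix.mul_inv_rev, Matrix.mul_inv_rev, hQinv, mul_assoc]
  have hPAinvP : P * A⁻¹ * P = ρ * σ⁻¹ * ρ := by
    rw [hAinv, ← hPP]
    simp only [mul_assoc]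
  have hPAP : P * A * P = σ := by
    rw [hAdef, ← mul_assoc, ← mul_assoc, hPQ, one_mul, mul_assoc, hQP, mul_one]
  set c : ℂ := ((p : ℝ) : ℂ)⁻¹ with hc
  set M := mpow A p with hM
  have hMf : M = fcal hAH (fun x => x ^ p) := mpow_eq hAH _
  -- functional-calculus identities
  have hone : (1 : Matrix (Fin d) (Fin d) ℂ) = fcal hAH (fun _ => 1) := (fcal_one hAH).symm
  have e1 : c • (M - 1) = fcal hAH (fun x => p⁻¹ * (x ^ p - 1)) := by
    rw [hMf, hone, hc, ← Complex.ofReal_inv, fcal_sub, fcal_smul]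
  have e2 : (1 : Matrix (Fin d) (Fin d) ℂ) - A⁻¹ = fcal hAH (fun x => 1 - x⁻¹) := by
    rw [fcal_inv hApd, hone, fcal_sub]
  have e3 : A - 1 = fcal hAH (fun x => x - 1) := by
    conv_lhs => rw [← fcal_id hAH, hone]
    rw [fcal_sub]
  have hX1 : c • (M - 1) - (1 - A⁻¹) =
      fcal hAH (fun x => p⁻¹ * (x ^ p - 1) - (1 - x⁻¹)) := by
    rw [e1, e2]; exact fcal_sub hAH _ _
  have hX2 : A - 1 - c • (M - 1) =
      fcal hAH (fun x => (x - 1) - p⁻¹ * (x ^ p - 1)) := by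
    rw [e3, e1]; exact fcal_sub hAH _ _
  -- Tq as conjugation
  have hTq : Tq ρ σ q = c • (P * M * P - ρ) := rfl
  have key1 : Tq ρ σ q - (ρ - ρ * σ⁻¹ * ρ) = P * (c • (M - 1) - (1 - A⁻¹)) * P := by
    rw [hTq, ← hPAinvP, ← hPP]
    simp only [Matrix.mul_sub, Matrix.sub_mul, smul_sub, mul_smul_comm,
      smul_mul_assoc, Matrix.mul_one, Matrix.one_mul, mul_assoc]
  have key2 : (σ - ρ) - Tq ρ σ q = P * (A - 1 - c • (M - 1)) * P := by
    rw [hTq, ← hPAP, ← hPP]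
    simp only [Matrix.mul_sub, Matrix.sub_mul, smul_sub, mul_smul_comm,
      smul_mul_assoc, Matrix.mul_one, Matrix.one_mul, mul_assoc]
  constructor
  · rw [key1, hX1]
    have := (fcal_posSemidef hAH (f := fun x => p⁻¹ * (x ^ p - 1) - (1 - x⁻¹))
      (fun i => by
        have := scalar_lb (hApd.eigenvalues_pos i) hp0 hp1
        linarith)).mul_mul_conjTranspose_same P
    rwa [hPH.eq] at this
  · rw [key2, hX2]
    have := (fcal_posSemidef hAH (f := fun x => (x - 1) - p⁻¹ * (x ^ p - 1))
      (fun i => by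
        have := scalar_ub (hApd.eigenvalues_pos i) hp0 hp1
        linarith)).mul_mul_conjTranspose_same P
    rwa [hPH.eq] at this
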